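/- Let q, q̄, s ∈ ℝ with q̄ s ≥ 0 and q + q̄ − q̄ s ≥ 0, and define φ : ℝ × 𝒫₂(ℝ) → ℝ by φ(x, m) = q x + q̄ (x − s ∫ z dm(z)) (the x-gradient of the linear–quadratic cost f(x,m) = ½(q x² + q̄ (x − s m̄)²)). Then φ is weakly monotone: for any square-integrable real random variables ξ, ξ', 𝔼[(φ(ξ, ℙ_ξ) − φ(ξ', ℙ_{ξ'}))(ξ − ξ')] ≥ 0. -/

import Mathlib

open MeasureTheory

/-- `φ(x, m) = q x + q̄ (x − s ∫ z dm(z))` is weakly monotone when `q̄ s ≥ 0` and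
`q + q̄ − q̄ s ≥ 0`: `𝔼[(φ(ξ, ℙ_ξ) − φ(ξ', ℙ_{ξ'}))(ξ − ξ')] ≥ 0` for square-integrable
real random variables, where `∫ z dℙ_ξ(z) = 𝔼ξ`. -/
theorem stmt5 {Ω : Type*} [MeasurableSpace Ω] (ℙ : Measure Ω) [IsProbabilityMeasure ℙ]
    (q qbar s : ℝ) (h1 : 0 ≤ qbar * s) (h2 : 0 ≤ q + qbar - qbar * s)
    (ξ ξ' : Ω → ℝ) (hξ : Measurable ξ) (hξ' : Measurable ξ')
    (hξ2 : MemLp ξ 2 ℙ) (hξ'2 : MemLp ξ' 2 ℙ) :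
    0 ≤ ∫ ω, ((q * ξ ω + qbar * (ξ ω - s * ∫ ω', ξ ω' ∂ℙ))
        - (q * ξ' ω + qbar * (ξ' ω - s * ∫ ω', ξ' ω' ∂ℙ))) * (ξ ω - ξ' ω) ∂ℙ := by
  set d : Ω → ℝ := fun ω => ξ ω - ξ' ω with hd_def
  have hd2 : MemLp d 2 ℙ := hξ2.sub hξ'2
  have hd_int : Integrable d ℙ := hd2.integrable (by norm_num)
  have hdsq : Integrable (fun ω => d ω ^ 2) ℙ := by
    have := hd2.integrable_sq
    simpa [sq] using this
  have hξint : Integrable ξ ℙ := hξ2.integrable (by norm_num)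
  have hξ'int : Integrable ξ' ℙ := hξ'2.integrable (by norm_num)
  set c : ℝ := ∫ ω, d ω ∂ℙ with hc_def
  have hc : c = (∫ ω, ξ ω ∂ℙ) - ∫ ω, ξ' ω ∂ℙ := by
    rw [hc_def, integral_sub hξint hξ'int]
  -- rewrite the integrand
  have hrw : ∀ ω, ((q * ξ ω + qbar * (ξ ω - s * ∫ ω', ξ ω' ∂ℙ))
        - (q * ξ' ω + qbar * (ξ' ω - s * ∫ ω', ξ' ω' ∂ℙ))) * (ξ ω - ξ' ω)
      = (q + qbar) * d ω ^ 2 - (qbar * s * c) * d ω := by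
    intro ω
    simp only [hd_def, hc]
    ring
  rw [integral_congr_ae (Filter.Eventually.of_forall hrw),
    integral_sub (hdsq.const_mul _) (hd_int.const_mul _),
    integral_const_mul, integral_const_mul, ← hc_def]
  -- Cauchy–Schwarz / Jensen: ∫ d² ≥ c²
  have key : c ^ 2 ≤ ∫ ω, d ω ^ 2 ∂ℙ := by
    have h0 : 0 ≤ ∫ ω, (d ω - c) ^ 2 ∂ℙ := integral_nonneg fun ω => sq_nonneg _
    have hexp : ∫ ω, (d ω - c) ^ 2 ∂ℙ
        = (∫ ω, d ω ^ 2 ∂ℙ) - 2 * c * c + c ^ 2 := by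
      have : ∀ ω, (d ω - c) ^ 2 = d ω ^ 2 - (2 * c) * d ω + c ^ 2 := fun ω => by ring
      rw [integral_congr_ae (Filter.Eventually.of_forall this),
        integral_add (by exact hdsq.sub (hd_int.const_mul _)) (integrable_const _),
        integral_sub hdsq (hd_int.const_mul _), integral_const_mul, integral_const]
      simp [← hc_def]
    nlinarith [h0, hexp]
  nlinarith [key, sq_nonneg c, h1, h2]
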